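/- Let A : Matrix (Fin n) (Fin n) ℝ with fill relation F, and let j < k be elements of Fin n. Then F j k holds if and only if there exists a vertex i that is a descendant of j in the elimination tree (i.e. i = j, or j is obtained from i by iterating parent) such that i is adjacent to k in G(A), i.e. A i k ≠ 0 or A k i ≠ 0. -/

import Mathlib

/-- The undirected graph `G(A)` of a square real matrix `A`: `i` is adjacent to `j` iff
`i ≠ j` and (`A i j ≠ 0` or `A j i ≠ 0`). -/
def graphOf {n : ℕ} (A : Matrix (Fin n) (Fin n) ℝ) : SimpleGraph (Fin n) where
  Adj i j := i ≠ j ∧ (A i j ≠ 0 ∨ A j i ≠ 0)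
  symm := by
    constructor
    intro i j h
    exact ⟨h.1.symm, h.2.symm⟩
  loopless := by
    constructor
    intro i h
    exact h.1 rfl

/-- The fill relation of `A`: `fill A i j` iff `i ≠ j` and there is a walk from `i` to
`j` in `G(A)` all of whose interior vertices `u` satisfy `u < i` and `u < j`. -/
def fill {n : ℕ} (A : Matrix (Fin n) (Fin n) ℝ) (i j : Fin n) : Prop :=
  i ≠ j ∧ ∃ w : (graphOf A).Walk i j, ∀ u ∈ w.support.tail.dropLast, u < i ∧ u < j

/-- `i` is a descendant of `j` in the elimination tree of `A`: `i = j` or `j` is obtained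
from `i` by iterating the parent map (each `t (l+1)` being the least element of the
nonempty set `{u | t l < u ∧ fill A (t l) u}`, i.e. the elimination-tree parent of `t l`). -/
def IsEtreeDescendant {n : ℕ} (A : Matrix (Fin n) (Fin n) ℝ) (i j : Fin n) : Prop :=
  ∃ (m : ℕ) (t : ℕ → Fin n), t 0 = i ∧ t m = j ∧
    ∀ l < m, IsLeast {u : Fin n | t l < u ∧ fill A (t l) u} (t (l + 1))

namespace EtreeAux

open SimpleGraph

/-- `tail` and `dropLast` commute. -/
lemma tail_dropLast_comm {α : Type*} (l : List α) : l.tail.dropLast = l.dropLast.tail := by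
  cases l with
  | nil => rfl
  | cons a l =>
    cases l with
    | nil => rfl
    | cons b l => simp

variable {n : ℕ} {A : Matrix (Fin n) (Fin n) ℝ}

/-- Any element of the tail of a walk's support is the endpoint or an interior vertex. -/
lemma mem_tail_cases {a b : Fin n} (w : (graphOf A).Walk a b) {u : Fin n}
    (hu : u ∈ w.support.tail) : u = b ∨ u ∈ w.support.tail.dropLast := by
  have hne : w.support.tail ≠ [] := List.ne_nil_of_mem hu
  have hlast : w.support.tail.getLast hne = b := by
    rw [List.getLast_tail]; exact w.getLast_support
  rw [← List.dropLast_concat_getLast hne, List.mem_append] at hu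
  rcases hu with h | h
  · exact Or.inr h
  · simp only [List.mem_singleton] at h
    exact Or.inl (h.trans hlast)

/-- Any element of the `dropLast` of a walk's support is the start or an interior vertex. -/
lemma mem_dropLast_cons {α : Type*} {u a : α} {l : List α} (hu : u ∈ (a :: l).dropLast) :
    u = a ∨ u ∈ l.dropLast := by
  cases l with
  | nil => simp at hu
  | cons b l => rw [List.dropLast_cons₂, List.mem_cons] at hu; exact hu

/-- Any element of the `dropLast` of a walk's support is the start or an interior vertex. -/
lemma mem_dropLast_cases {a b : Fin n} (w : (graphOf A).Walk a b) {u : Fin n}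
    (hu : u ∈ w.support.dropLast) : u = a ∨ u ∈ w.support.tail.dropLast := by
  rw [w.support_eq_cons] at hu
  exact mem_dropLast_cons hu

/-- Any element of a walk's support is the start, the end, or an interior vertex. -/
lemma mem_support_cases {a b : Fin n} (w : (graphOf A).Walk a b) {u : Fin n}
    (hu : u ∈ w.support) : u = a ∨ u = b ∨ u ∈ w.support.tail.dropLast := by
  rw [w.support_eq_cons, List.mem_cons] at hu
  rcases hu with h | h
  · exact Or.inl h
  · exact Or.inr (mem_tail_cases w h)

/-- A single edge gives fill. -/
lemma fill_of_adj {a b : Fin n} (hab : a ≠ b) (h : A a b ≠ 0 ∨ A b a ≠ 0) : fill A a b :=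
  ⟨hab, SimpleGraph.Walk.cons ⟨hab, h⟩ SimpleGraph.Walk.nil, by intro u hu; exact absurd hu List.not_mem_nil⟩

/-- Every nonempty set in `Fin n` has a least element. -/
lemma exists_isLeast {s : Set (Fin n)} (hs : s.Nonempty) : ∃ m, IsLeast s m := by
  have wf : WellFounded ((· < ·) : Fin n → Fin n → Prop) := wellFounded_lt
  exact ⟨wf.min s hs, wf.min_mem s hs, fun b hb => not_lt.1 (fun h => wf.not_lt_min s hb h)⟩

/-- The key step lemma: if `fill A x p`, `fill A x k`, `x < p < k`, then `fill A p k`. -/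
lemma fill_step {x p k : Fin n} (hxp : x < p) (hpk : p < k)
    (hfp : fill A x p) (hfk : fill A x k) : fill A p k := by
  obtain ⟨-, w1, hw1⟩ := hfp
  obtain ⟨-, w2, hw2⟩ := hfk
  refine ⟨hpk.ne, w1.reverse.append w2, ?_⟩
  intro u hu
  have hu1 : u ∈ (w1.reverse.append w2).support.tail := List.dropLast_subset _ hu
  have hu2 : u ∈ (w1.reverse.append w2).support.dropLast := by
    rw [tail_dropLast_comm] at hu
    exact List.tail_subset _ hu
  -- analyze hu1
  rw [Walk.tail_support_append, Walk.support_reverse, List.tail_reverse,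
    List.mem_append, List.mem_reverse] at hu1
  -- analyze hu2
  have h2ne : w2.support.tail ≠ [] :=
    List.ne_nil_of_mem (Walk.end_mem_tail_support_of_ne (hxp.trans hpk).ne w2)
  rw [Walk.support_append, List.dropLast_append_of_ne_nil h2ne, List.mem_append,
    Walk.support_reverse, List.mem_reverse] at hu2
  have hnotp : u ≠ p := by
    intro hup
    subst hup
    rcases hu1 with h | h
    · rcases mem_dropLast_cases w1 h with h' | h'
      · exact absurd h' hxp.ne'
      · exact absurd (hw1 _ h').1 (not_lt.2 hxp.le)
    · rcases mem_tail_cases w2 h with h' | h'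
      · exact absurd h' hpk.ne
      · exact absurd (hw2 _ h').1 (not_lt.2 hxp.le)
  rcases hu2 with h | h
  · rcases mem_support_cases w1 h with rfl | rfl | h
    · exact ⟨hxp, hxp.trans hpk⟩
    · exact absurd rfl hnotp
    · exact ⟨(hw1 _ h).1.trans hxp, ((hw1 _ h).1.trans hxp).trans hpk⟩
  · rw [tail_dropLast_comm] at h
    have h' : u ∈ w2.support.tail.dropLast := by rw [tail_dropLast_comm]; exact h
    exact ⟨(hw2 _ h').1.trans hxp, (hw2 _ h').2⟩

/-- From a walk starting at `i` and ending above `i` (with a low prefix), extract a vertex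
`v > i` on the walk with `fill A i v`. -/
lemma extract {i z b : Fin n} (w : (graphOf A).Walk b z) :
    ∀ (pw : (graphOf A).Walk i b), (∀ u ∈ pw.support.tail, u < i) → i < z →
      ∃ v ∈ w.support, i < v ∧ fill A i v := by
  induction w with
  | nil =>
    intro pw hpw hiz
    have hz := Walk.end_mem_tail_support_of_ne hiz.ne pw
    exact absurd (hpw _ hz) (not_lt.2 hiz.le)
  | @cons b c z h w ih =>
    intro pw hpw hiz
    rcases lt_trichotomy c i with hci | rfl | hic
    · have hpw' : ∀ u ∈ (pw.append (Walk.cons h Walk.nil)).support.tail, u < i := by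
        intro u hu
        rw [Walk.tail_support_append] at hu
        simp only [Walk.support_cons, Walk.support_nil, List.tail_cons, List.mem_append,
          List.mem_singleton] at hu
        rcases hu with hu | rfl
        · exact hpw u hu
        · exact hci
      obtain ⟨v, hv, h1, h2⟩ := ih (pw.append (Walk.cons h Walk.nil)) hpw' hiz
      exact ⟨v, by rw [Walk.support_cons]; exact List.mem_cons_of_mem _ hv, h1, h2⟩
    · obtain ⟨v, hv, h1, h2⟩ := ih Walk.nil (by simp) hiz
      exact ⟨v, by rw [Walk.support_cons]; exact List.mem_cons_of_mem _ hv, h1, h2⟩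
    · refine ⟨c, by rw [Walk.support_cons]; exact List.mem_cons_of_mem _ w.start_mem_support,
        hic, hic.ne, pw.append (Walk.cons h Walk.nil), ?_⟩
      intro u hu
      have hts : (pw.append (Walk.cons h Walk.nil)).support.tail = pw.support.tail ++ [c] := by
        rw [Walk.tail_support_append]
        simp
      rw [hts, List.dropLast_concat] at hu
      exact ⟨hpw u hu, (hpw u hu).trans hic⟩

/-- Prepend a parent step to a descendant chain. -/
lemma descendant_cons {i p j : Fin n} (hp : IsLeast {u : Fin n | i < u ∧ fill A i u} p)
    (hd : IsEtreeDescendant A p j) : IsEtreeDescendant A i j := by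
  obtain ⟨m, t, ht0, htm, hts⟩ := hd
  refine ⟨m + 1, fun l => if l = 0 then i else t (l - 1), by simp, by simp [htm], ?_⟩
  intro l hl
  rcases Nat.eq_zero_or_pos l with rfl | hlpos
  · simpa [ht0] using hp
  · have h1 : l ≠ 0 := hlpos.ne'
    have h2 : l + 1 ≠ 0 := by omega
    simp only [h1, h2, if_false]
    have h3 : l + 1 - 1 = (l - 1) + 1 := by omega
    rw [h3]
    exact hts (l - 1) (by omega)

/-- If there is a walk from `i` to `j` (`i < j`) whose vertices other than `j` are all
below `j`, then `j` is an ancestor of `i` in the elimination tree. -/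
lemma ancestor : ∀ (d : ℕ) {i j : Fin n}, (j : ℕ) - (i : ℕ) ≤ d → i < j →
    (∃ w : (graphOf A).Walk i j, ∀ u ∈ w.support, u ≠ j → u < j) →
    IsEtreeDescendant A i j := by
  intro d
  induction d with
  | zero =>
    intro i j hd hij _
    have : (i : ℕ) < (j : ℕ) := hij
    omega
  | succ d ih =>
    intro i j hd hij hw
    obtain ⟨w, hwsup⟩ := hw
    obtain ⟨v, hv, hiv, hfv⟩ := extract w Walk.nil (by simp) hij
    obtain ⟨p, hp⟩ := exists_isLeast (s := {u : Fin n | i < u ∧ fill A i u}) ⟨v, hiv, hfv⟩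
    have hip : i < p := hp.1.1
    have hpj : p ≤ j := by
      have hpv : p ≤ v := hp.2 ⟨hiv, hfv⟩
      rcases eq_or_ne v j with rfl | hvj
      · exact hpv
      · exact hpv.trans (hwsup v hv hvj).le
    rcases eq_or_lt_of_le hpj with rfl | hplt
    · refine ⟨1, fun l => if l = 0 then i else p, by simp, by simp, ?_⟩
      intro l hl
      interval_cases l
      simpa using hp
    · have hfp : fill A i p := hp.1.2
      obtain ⟨-, fw, hfw⟩ := hfp
      have hd2 : IsEtreeDescendant A p j := by
        have hi : (i : ℕ) < (p : ℕ) := hip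
        have hp' : (p : ℕ) < (j : ℕ) := hplt
        apply ih (by omega) hplt
        refine ⟨fw.reverse.append w, ?_⟩
        intro u hu hunej
        rw [Walk.mem_support_append_iff] at hu
        rcases hu with hu | hu
        · rw [Walk.support_reverse, List.mem_reverse] at hu
          rcases mem_support_cases fw hu with rfl | rfl | hint
          · exact hij
          · exact hplt
          · exact (hfw u hint).1.trans hij
        · exact hwsup u hu hunej
      exact descendant_cons hp hd2

end EtreeAux

/-- for `j < k`, `fill A j k` holds iff some descendant `i` of `j` in the
elimination tree is adjacent to `k` in `G(A)`, i.e. `A i k ≠ 0` or `A k i ≠ 0`. -/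
theorem fill_iff_descendant_adj {n : ℕ} (A : Matrix (Fin n) (Fin n) ℝ) (j k : Fin n)
    (hjk : j < k) :
    fill A j k ↔ ∃ i : Fin n, IsEtreeDescendant A i j ∧ (A i k ≠ 0 ∨ A k i ≠ 0) := by
  constructor
  · rintro ⟨hne, w, hw⟩
    obtain ⟨i, hadj, w', hw'eq⟩ := SimpleGraph.Walk.exists_eq_cons_of_ne hjk.ne' w.reverse
    have hadj' : i ≠ k ∧ (A i k ≠ 0 ∨ A k i ≠ 0) := hadj.symm
    have hsup : w'.support = w.support.dropLast.reverse := by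
      have h1 : w.reverse.support = k :: w'.support := by
        rw [hw'eq, SimpleGraph.Walk.support_cons]
      rw [SimpleGraph.Walk.support_reverse] at h1
      have h2 := congrArg List.tail h1
      rw [List.tail_reverse] at h2
      simpa using h2.symm
    have hall : ∀ u ∈ w'.support, u ≠ j → u < j := by
      intro u hu hunej
      rw [hsup, List.mem_reverse] at hu
      rcases EtreeAux.mem_dropLast_cases w hu with rfl | h
      · exact absurd rfl hunej
      · exact (hw u h).1
    rcases eq_or_ne i j with rfl | hij
    · exact ⟨i, ⟨0, fun _ => i, rfl, rfl, fun l hl => absurd hl (Nat.not_lt_zero l)⟩, hadj'.2⟩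
    · have hiw : i ∈ w'.support := w'.start_mem_support
      have hilt : i < j := hall i hiw hij
      exact ⟨i, EtreeAux.ancestor ((j : ℕ) - (i : ℕ)) le_rfl hilt ⟨w', hall⟩, hadj'.2⟩
  · rintro ⟨i, ⟨m, t, ht0, htm, hts⟩, hik⟩
    have hmono : ∀ b, b ≤ m → ∀ a, a ≤ b → t a ≤ t b := by
      intro b
      induction b with
      | zero =>
        intro _ a ha
        have : a = 0 := Nat.le_zero.mp ha
        rw [this]
      | succ b ihb =>
        intro hbm a ha
        rcases Nat.lt_or_ge a (b + 1) with h | h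
        · have h1 : t a ≤ t b := ihb (by omega) a (by omega)
          have h2 : t b < t (b + 1) := (hts b (by omega)).1.1
          exact h1.trans h2.le
        · have : a = b + 1 := by omega
          rw [this]
    have hij : i ≤ j := by
      have := hmono m le_rfl 0 (Nat.zero_le m)
      rwa [ht0, htm] at this
    have hfill : ∀ l, l ≤ m → fill A (t l) k := by
      intro l
      induction l with
      | zero =>
        intro _
        rw [ht0]
        exact EtreeAux.fill_of_adj (hij.trans_lt hjk).ne hik
      | succ l ihl =>
        intro hlm
        have hfl := ihl (by omega)
        have hleast := hts l (by omega)
        have h1 : t (l + 1) ≤ j := by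
          have := hmono m le_rfl (l + 1) hlm
          rwa [htm] at this
        exact EtreeAux.fill_step hleast.1.1 (h1.trans_lt hjk) hleast.1.2 hfl
    have := hfill m le_rfl
    rwa [htm] at this
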